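/- Let A₁,…,A_k be quasi S-primary C-hyperideals of a commutative multiplicative hyperring G and A a hyperideal of G with A ⊆ ⋃_{i=1}^k A_i. Then there exists t ∈ S and some 1 ≤ j ≤ k such that t∘A ⊆ rad(A_j). -/

import Mathlib

open Set

/-- A commutative multiplicative hyperring: a commutative additive group with a
commutative, associative hyperoperation `hmul` satisfying `(-a)∘b = -(a∘b)`,
weak distributivity, and having an identity element `e` with `a ∈ e∘a`. -/
class MulHyperring (G : Type*) extends AddCommGroup G where
  hmul : G → G → Set G
  hmul_nonempty : ∀ a b : G, (hmul a b).Nonempty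
  hmul_comm : ∀ a b : G, hmul a b = hmul b a
  hmul_assoc : ∀ a b c : G, (⋃ x ∈ hmul a b, hmul x c) = ⋃ x ∈ hmul b c, hmul a x
  neg_hmul : ∀ a b : G, hmul (-a) b = (fun x => -x) '' (hmul a b)
  hmul_add : ∀ a b c : G,
    hmul a (b + c) ⊆ {x | ∃ u ∈ hmul a b, ∃ v ∈ hmul a c, x = u + v}
  e : G
  e_mem : ∀ a : G, a ∈ hmul e a

namespace MulHyperring

variable {G : Type*} [MulHyperring G]

/-- Hyperproduct of an element with a set: `a ∘ B = ⋃ b ∈ B, a ∘ b`. -/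
def smulSet (a : G) (B : Set G) : Set G := ⋃ b ∈ B, hmul a b

/-- Hyperproduct of two sets. -/
def setMul (A B : Set G) : Set G := ⋃ a ∈ A, ⋃ b ∈ B, hmul a b

/-- Hyperproduct `a₁ ∘ a₂ ∘ ⋯ ∘ aₙ` of a (nonempty) list of elements. -/
def hProd : List G → Set G
  | [] => ∅
  | [a] => {a}
  | a :: b :: l => smulSet a (hProd (b :: l))

/-- `aⁿ` as a hyperproduct. -/
def hPow (a : G) (n : ℕ) : Set G := hProd (List.replicate n a)

/-- `A` is a hyperideal of `G`. -/
def IsHyperideal (A : Set G) : Prop :=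
  A.Nonempty ∧ (∀ x ∈ A, ∀ y ∈ A, x - y ∈ A) ∧ ∀ r : G, ∀ x ∈ A, hmul r x ⊆ A

/-- `A` is a `C`-hyperideal: any finite hyperproduct meeting `A` is contained in `A`. -/
def IsCHyperideal (A : Set G) : Prop :=
  IsHyperideal A ∧ ∀ l : List G, l ≠ [] → (hProd l ∩ A).Nonempty → hProd l ⊆ A

/-- The radical of a (C-)hyperideal: `{a | aⁿ ⊆ A for some n ≥ 1}`. -/
def rad (A : Set G) : Set G := {a | ∃ n : ℕ, 1 ≤ n ∧ hPow a n ⊆ A}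

/-- The hyperideal generated by a set. -/
def idealGen (X : Set G) : Set G := ⋂₀ {A | IsHyperideal A ∧ X ⊆ A}

/-- The hyperideal product of two hyperideals. -/
def idealMul (A B : Set G) : Set G := idealGen (setMul A B)

/-- Multiplicative closed subset. -/
def IsMCS (S : Set G) : Prop :=
  e ∈ S ∧ ∀ s₁ ∈ S, ∀ s₂ ∈ S, (hmul s₁ s₂ ∩ S).Nonempty

/-- Prime hyperideal. -/
def IsPrime (P : Set G) : Prop :=
  IsHyperideal P ∧ P ≠ univ ∧ ∀ x y : G, hmul x y ⊆ P → x ∈ P ∨ y ∈ P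

/-- `S`-prime hyperideal. -/
def IsSPrime (S A : Set G) : Prop :=
  IsHyperideal A ∧ A ∩ S = ∅ ∧
    ∃ t ∈ S, ∀ u v : G, hmul u v ⊆ A → hmul t u ⊆ A ∨ hmul t v ⊆ A

/-- `S`-primary hyperideal. -/
def IsSPrimary (S A : Set G) : Prop :=
  IsHyperideal A ∧ A ∩ S = ∅ ∧
    ∃ t ∈ S, ∀ u v : G, hmul u v ⊆ A → hmul t u ⊆ A ∨ hmul t v ⊆ rad A

/-- Quasi `S`-primary hyperideal. -/
def IsQuasiSPrimary (S A : Set G) : Prop :=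
  IsHyperideal A ∧ A ∩ S = ∅ ∧
    ∃ t ∈ S, ∀ u v : G, hmul u v ⊆ A → hmul t u ⊆ rad A ∨ hmul t v ⊆ rad A

/-- Weakly quasi `S`-primary hyperideal. -/
def IsWeaklyQuasiSPrimary (S A : Set G) : Prop :=
  IsHyperideal A ∧ A ∩ S = ∅ ∧
    ∃ t ∈ S, ∀ u v : G, 0 ∉ hmul u v → hmul u v ⊆ A →
      hmul t u ⊆ rad A ∨ hmul t v ⊆ rad A

/-- Strongly quasi `S`-primary hyperideal. -/
def IsStronglyQuasiSPrimary (S A : Set G) : Prop :=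
  IsHyperideal A ∧ A ∩ S = ∅ ∧
    ∃ t ∈ S, ∀ u v : G, hmul u v ⊆ A →
      smulSet t (hPow u 2) ⊆ A ∨ hmul t v ⊆ rad A

/-- The residual `(B : x) = {y | y ∘ x ⊆ B}`. -/
def colon (B : Set G) (x : G) : Set G := {y | hmul y x ⊆ B}

end MulHyperring

namespace MulHyperring

variable {G : Type*} [MulHyperring G]

lemma hProd_singleton (a : G) : hProd [a] = {a} := rfl

lemma hProd_cons {l : List G} (h : l ≠ []) (a : G) :
    hProd (a :: l) = smulSet a (hProd l) := by
  cases l with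
  | nil => exact absurd rfl h
  | cons b m => rfl

lemma hProd_nonempty {l : List G} (h : l ≠ []) : (hProd l).Nonempty := by
  induction l with
  | nil => exact absurd rfl h
  | cons a m ih =>
    cases m with
    | nil => exact ⟨a, rfl⟩
    | cons b m' =>
      obtain ⟨x, hx⟩ := ih (by simp)
      obtain ⟨z, hz⟩ := hmul_nonempty a x
      exact ⟨z, Set.mem_biUnion hx hz⟩

lemma smulSet_eq_setMul (a : G) (X : Set G) : smulSet a X = setMul {a} X := by
  simp [smulSet, setMul]

lemma setMul_comm (X Y : Set G) : setMul X Y = setMul Y X := by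
  simp only [setMul]
  ext z
  simp only [Set.mem_iUnion]
  constructor
  · rintro ⟨a, ha, b, hb, h⟩; exact ⟨b, hb, a, ha, hmul_comm a b ▸ h⟩
  · rintro ⟨b, hb, a, ha, h⟩; exact ⟨a, ha, b, hb, hmul_comm b a ▸ h⟩

lemma smulSet_setMul (a : G) (X Y : Set G) :
    smulSet a (setMul X Y) = setMul (smulSet a X) Y := by
  ext z
  simp only [smulSet, setMul, Set.mem_iUnion]
  constructor
  · rintro ⟨w, ⟨x, hx, y, hy, hw⟩, hz⟩
    have hz' : z ∈ ⋃ w ∈ hmul x y, hmul a w := Set.mem_biUnion hw hz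
    rw [← hmul_assoc a x y] at hz'
    obtain ⟨v, hv, hzv⟩ := Set.mem_iUnion₂.mp hz'
    exact ⟨v, ⟨x, hx, hv⟩, y, hy, hzv⟩
  · rintro ⟨v, ⟨x, hx, hv⟩, y, hy, hzv⟩
    have hz' : z ∈ ⋃ v ∈ hmul a x, hmul v y := Set.mem_biUnion hv hzv
    rw [hmul_assoc a x y] at hz'
    obtain ⟨w, hw, hzw⟩ := Set.mem_iUnion₂.mp hz'
    exact ⟨w, ⟨x, hx, y, hy, hw⟩, hzw⟩

end MulHyperring
namespace MulHyperring

variable {G : Type*} [MulHyperring G]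

lemma mem_setMul {X Y : Set G} {z : G} :
    z ∈ setMul X Y ↔ ∃ x ∈ X, ∃ y ∈ Y, z ∈ hmul x y := by
  simp [setMul]

lemma mem_smulSet {a : G} {X : Set G} {z : G} :
    z ∈ smulSet a X ↔ ∃ x ∈ X, z ∈ hmul a x := by
  simp [smulSet]

lemma setMul_assoc (X Y Z : Set G) : setMul (setMul X Y) Z = setMul X (setMul Y Z) := by
  have h1 : ∀ (a : G) (Y Z : Set G), setMul (smulSet a Y) Z = smulSet a (setMul Y Z) :=
    fun a Y Z => (smulSet_setMul a Y Z).symm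
  ext z
  constructor
  · intro hz
    obtain ⟨w, hw, c, hc, hzc⟩ := mem_setMul.mp hz
    obtain ⟨x, hx, y, hy, hwxy⟩ := mem_setMul.mp hw
    have : z ∈ setMul (smulSet x Y) Z :=
      mem_setMul.mpr ⟨w, mem_smulSet.mpr ⟨y, hy, hwxy⟩, c, hc, hzc⟩
    rw [h1] at this
    obtain ⟨v, hv, hzv⟩ := mem_smulSet.mp this
    exact mem_setMul.mpr ⟨x, hx, v, hv, hzv⟩
  · intro hz
    obtain ⟨x, hx, v, hv, hzv⟩ := mem_setMul.mp hz
    have : z ∈ smulSet x (setMul Y Z) := mem_smulSet.mpr ⟨v, hv, hzv⟩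
    rw [← h1] at this
    obtain ⟨w, hw, c, hc, hzc⟩ := mem_setMul.mp this
    obtain ⟨y, hy, hwy⟩ := mem_smulSet.mp hw
    exact mem_setMul.mpr ⟨w, mem_setMul.mpr ⟨x, hx, y, hy, hwy⟩, c, hc, hzc⟩

lemma setMul_mono {X X' Y Y' : Set G} (hX : X ⊆ X') (hY : Y ⊆ Y') :
    setMul X Y ⊆ setMul X' Y' := by
  intro z hz
  obtain ⟨x, hx, y, hy, h⟩ := mem_setMul.mp hz
  exact mem_setMul.mpr ⟨x, hX hx, y, hY hy, h⟩

lemma hProd_append {l m : List G} (hl : l ≠ []) (hm : m ≠ []) :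
    hProd (l ++ m) = setMul (hProd l) (hProd m) := by
  induction l with
  | nil => exact absurd rfl hl
  | cons a l' ih =>
    cases l' with
    | nil =>
      rw [List.singleton_append, hProd_cons hm, hProd_singleton, smulSet_eq_setMul]
    | cons b l'' =>
      have hl' : (b :: l'') ≠ [] := by simp
      have happ : (b :: l'') ++ m ≠ [] := by simp
      rw [List.cons_append, hProd_cons happ, ih hl', hProd_cons hl', smulSet_setMul]

lemma smulSet_comm (a b : G) (X : Set G) :
    smulSet a (smulSet b X) = smulSet b (smulSet a X) := by
  rw [smulSet_eq_setMul, smulSet_eq_setMul b X, ← setMul_assoc, setMul_comm ({a} : Set G),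
    setMul_assoc, ← smulSet_eq_setMul, ← smulSet_eq_setMul]

lemma hProd_perm {l m : List G} (h : l.Perm m) : hProd l = hProd m := by
  induction h with
  | nil => rfl
  | cons a h ih =>
    rename_i l₁ l₂
    cases l₁ with
    | nil => rw [← h.nil_eq]
    | cons x l₁' =>
      have h2 : l₂ ≠ [] := by
        intro he; rw [he] at h
        exact absurd h.symm.nil_eq (by simp)
      rw [hProd_cons (by simp) a, hProd_cons h2 a, ih]
  | swap a b l =>
    cases l with
    | nil =>
      show smulSet b {a} = smulSet a {b}
      simp only [smulSet, Set.biUnion_singleton]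
      exact hmul_comm b a
    | cons c l' =>
      have hne : (c :: l') ≠ [] := by simp
      rw [hProd_cons (by simp) b, hProd_cons hne a,
        hProd_cons (show (b :: c :: l') ≠ [] by simp) a, hProd_cons hne b]
      exact smulSet_comm b a _
  | trans h1 h2 ih1 ih2 => rw [ih1, ih2]

end MulHyperring
namespace MulHyperring

variable {G : Type*} [MulHyperring G]

lemma IsHyperideal.zero_mem {A : Set G} (hA : IsHyperideal A) : (0 : G) ∈ A := by
  obtain ⟨⟨a, ha⟩, hsub, _⟩ := hA
  simpa using hsub a ha a ha

lemma IsHyperideal.neg_mem {A : Set G} (hA : IsHyperideal A) {x : G} (hx : x ∈ A) :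
    -x ∈ A := by
  simpa using hA.2.1 0 hA.zero_mem x hx

lemma IsHyperideal.add_mem {A : Set G} (hA : IsHyperideal A) {x y : G} (hx : x ∈ A)
    (hy : y ∈ A) : x + y ∈ A := by
  simpa [sub_neg_eq_add] using hA.2.1 x hx (-y) (hA.neg_mem hy)

lemma IsHyperideal.sub_mem {A : Set G} (hA : IsHyperideal A) {x y : G} (hx : x ∈ A)
    (hy : y ∈ A) : x - y ∈ A := hA.2.1 x hx y hy

lemma IsHyperideal.absorb {A : Set G} (hA : IsHyperideal A) (r : G) {x : G} (hx : x ∈ A) :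
    hmul r x ⊆ A := hA.2.2 r x hx

lemma IsHyperideal.absorb' {A : Set G} (hA : IsHyperideal A) (r : G) {x : G} (hx : x ∈ A) :
    hmul x r ⊆ A := by rw [hmul_comm]; exact hA.2.2 r x hx

/-- If the product of the tail is inside a hyperideal, so is the whole product. -/
lemma hProd_append_subset {A : Set G} (hA : IsHyperideal A) {l m : List G} (hm : m ≠ [])
    (h : hProd m ⊆ A) : hProd (l ++ m) ⊆ A := by
  cases l with
  | nil => simpa using h
  | cons a l' =>
    rw [hProd_append (by simp) hm]
    intro z hz
    obtain ⟨x, _, y, hy, hzxy⟩ := mem_setMul.mp hz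
    exact hA.absorb x (h hy) hzxy

/-- If some member of the list lies in a hyperideal, the product does. -/
lemma hProd_subset_of_mem {A : Set G} (hA : IsHyperideal A) {l : List G} {b : G}
    (hb : b ∈ l) (hbA : b ∈ A) : hProd l ⊆ A := by
  classical
  have hperm : l.Perm (l.erase b ++ [b]) :=
    ((List.perm_cons_erase hb).trans (List.perm_append_singleton b (l.erase b)).symm)
  rw [hProd_perm hperm]
  exact hProd_append_subset hA (by simp) (by rw [hProd_singleton]; simpa using hbA)

lemma hPow_one (a : G) : hPow a 1 = {a} := rfl

lemma hPow_nonempty {a : G} {n : ℕ} (hn : 1 ≤ n) : (hPow a n).Nonempty :=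
  hProd_nonempty (by simp; omega)

lemma hPow_succ (a : G) {n : ℕ} (hn : 1 ≤ n) :
    hPow a (n + 1) = smulSet a (hPow a n) := by
  rw [hPow, List.replicate_succ, hProd_cons (by simp; omega)]
  rfl

/-- Powers beyond a threshold stay in the hyperideal. -/
lemma hPow_subset_of_le {A : Set G} (hA : IsHyperideal A) {a : G} {m j : ℕ}
    (hm : 1 ≤ m) (h : hPow a m ⊆ A) (hj : m ≤ j) : hPow a j ⊆ A := by
  have : List.replicate j a = List.replicate (j - m) a ++ List.replicate m a := by
    rw [← List.replicate_add]; congr 1; omega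
  rw [hPow, this]
  exact hProd_append_subset hA (by simp; omega) h

lemma flatten_replicate_replicate (n k : ℕ) (z : G) :
    (List.replicate n (List.replicate k z)).flatten = List.replicate (n * k) z := by
  induction n with
  | zero => simp
  | succ n ih => rw [List.replicate_succ, List.flatten_cons (l := List.replicate k z), ih, ← List.replicate_add,
      Nat.succ_mul, Nat.add_comm]

lemma flatten_replicate_ne {l : List G} (hl : l ≠ []) {n : ℕ} (hn : 1 ≤ n) :
    (List.replicate n l).flatten ≠ [] := by
  cases n with
  | zero => omega
  | succ n => simp [List.replicate_succ, hl]

lemma mem_flatten_replicate {l : List G} {n : ℕ} {x : G}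
    (hx : x ∈ (List.replicate n l).flatten) : x ∈ l := by
  obtain ⟨l', hl', hxl'⟩ := List.mem_flatten.mp hx
  rwa [List.eq_of_mem_replicate hl'] at hxl'

/-- If `z ∈ hProd l` then `z ^ n ⊆ hProd (l ++ ⋯ ++ l)` (`n` copies). -/
lemma hPow_subset_hProd_flatten {l : List G} (hl : l ≠ []) {z : G} (hz : z ∈ hProd l)
    {n : ℕ} (hn : 1 ≤ n) : hPow z n ⊆ hProd (List.replicate n l).flatten := by
  induction n with
  | zero => omega
  | succ n ih =>
    cases Nat.eq_or_lt_of_le hn with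
    | inl h =>
      have : n = 0 := by omega
      subst this
      intro w hw
      rw [hPow_one] at hw
      simp only [Set.mem_singleton_iff] at hw
      subst hw
      simpa using hz
    | inr h =>
      have hn1 : 1 ≤ n := by omega
      rw [hPow_succ z hn1]
      have hflat : (List.replicate (n + 1) l).flatten = l ++ (List.replicate n l).flatten := by
        exact List.flatten_cons ..
      rw [hflat, hProd_append hl (flatten_replicate_ne hl hn1)]
      intro w hw
      obtain ⟨x, hx, hwx⟩ := mem_smulSet.mp hw
      exact mem_setMul.mpr ⟨z, hz, x, ih hn1 hx, hwx⟩

end MulHyperring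
namespace MulHyperring

variable {G : Type*} [MulHyperring G]

omit [MulHyperring G] in
lemma flatten_replicate_pair_perm (n : ℕ) (u v : G) :
    ((List.replicate n [u, v]).flatten).Perm
      (List.replicate n u ++ List.replicate n v) := by
  induction n with
  | zero => simp
  | succ n ih =>
    rw [List.replicate_succ, List.flatten_cons]
    refine ((ih.append_left [u, v]).trans ?_)
    show (u :: v :: (List.replicate n u ++ List.replicate n v)).Perm _
    rw [List.replicate_succ (a := u) (n := n), List.replicate_succ (a := v) (n := n),
      show (u :: List.replicate n u) ++ v :: List.replicate n v
        = u :: (List.replicate n u ++ v :: List.replicate n v) from rfl]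
    exact (List.perm_middle.symm).cons u

lemma hProd_pair (u v : G) : hProd [u, v] = hmul u v := by
  rw [hProd_cons (by simp), hProd_singleton]
  simp [smulSet]

lemma subset_rad (A : Set G) : A ⊆ rad A := fun a ha =>
  ⟨1, le_refl 1, by rw [hPow_one]; simpa using ha⟩

/-- The key consequence of the `C`-property: if a power of an element of `hProd l`
lies in `A`, then the corresponding expanded product lies in `A`. -/
lemma CHyperideal.expand {A : Set G} (hA : IsCHyperideal A) {l : List G} (hl : l ≠ [])
    {z : G} (hz : z ∈ hProd l) {n : ℕ} (hn : 1 ≤ n) (h : hPow z n ⊆ A) :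
    hProd (List.replicate n l).flatten ⊆ A := by
  apply hA.2 _ (flatten_replicate_ne hl hn)
  obtain ⟨w, hw⟩ := hPow_nonempty (a := z) hn
  exact ⟨w, hPow_subset_hProd_flatten hl hz hn hw, h hw⟩

lemma rad_absorb {A : Set G} (hA : IsHyperideal A) (r : G) {x : G} (hx : x ∈ rad A) :
    hmul r x ⊆ rad A := by
  obtain ⟨n, hn, hxn⟩ := hx
  intro z hz
  have hz' : z ∈ hProd [r, x] := by rwa [hProd_pair]
  refine ⟨n, hn, (hPow_subset_hProd_flatten (by simp) hz' hn).trans ?_⟩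
  rw [hProd_perm (flatten_replicate_pair_perm n r x)]
  exact hProd_append_subset hA (by simp; omega) hxn

lemma rad_absorb' {A : Set G} (hA : IsHyperideal A) (r : G) {x : G} (hx : x ∈ rad A) :
    hmul x r ⊆ rad A := by rw [hmul_comm]; exact rad_absorb hA r hx

lemma rad_idem {A : Set G} (hA : IsCHyperideal A) {z : G} (hz : z ∈ rad (rad A)) :
    z ∈ rad A := by
  obtain ⟨k, hk, hzk⟩ := hz
  obtain ⟨w, hw⟩ := hPow_nonempty (a := z) hk
  obtain ⟨n, hn, hwn⟩ := hzk hw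
  have hexp := CHyperideal.expand hA (l := List.replicate k z) (by simp; omega) hw hn hwn
  rw [flatten_replicate_replicate] at hexp
  exact ⟨n * k, by simpa using Nat.mul_le_mul hn hk, hexp⟩

lemma neg_mem_rad {A : Set G} (hA : IsHyperideal A) {x : G} (hx : x ∈ rad A) :
    -x ∈ rad A := by
  have h1 : x ∈ hmul e x := e_mem x
  have h2 : -x ∈ hmul (-e) x := by
    rw [neg_hmul]; exact ⟨x, h1, rfl⟩
  exact rad_absorb hA (-e) hx h2

lemma smulSet_subset {a : G} {X Y : Set G} (h : ∀ x ∈ X, hmul a x ⊆ Y) :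
    smulSet a X ⊆ Y := by
  intro z hz
  obtain ⟨x, hx, hzx⟩ := mem_smulSet.mp hz
  exact h x hx hzx

lemma hPow_inter_S {S : Set G} (hS : IsMCS S) {s : G} (hs : s ∈ S) {n : ℕ} (hn : 1 ≤ n) :
    (hPow s n ∩ S).Nonempty := by
  induction n with
  | zero => omega
  | succ n ih =>
    rcases Nat.eq_or_lt_of_le hn with h | h
    · exact ⟨s, by rw [← h, hPow_one]; exact rfl, hs⟩
    · have hn1 : 1 ≤ n := by omega
      obtain ⟨x, hx, hxS⟩ := ih hn1
      obtain ⟨y, hy, hyS⟩ := hS.2 s hs x hxS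
      exact ⟨y, by rw [hPow_succ s hn1]; exact Set.mem_biUnion hx hy, hyS⟩

lemma rad_inter_S {S A : Set G} (hS : IsMCS S) (hdisj : A ∩ S = ∅) :
    rad A ∩ S = ∅ := by
  by_contra h
  obtain ⟨x, ⟨n, hn, hxn⟩, hxS⟩ := Set.nonempty_iff_ne_empty.mpr h
  obtain ⟨y, hy, hyS⟩ := hPow_inter_S hS hxS hn
  exact absurd hdisj (Set.nonempty_iff_ne_empty.mp ⟨y, hxn hy, hyS⟩)

end MulHyperring
namespace MulHyperring

variable {G : Type*} [MulHyperring G]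

/-- The additive subgroup underlying a hyperideal. -/
def IsHyperideal.toAddSubgroup {A : Set G} (hA : IsHyperideal A) : AddSubgroup G where
  carrier := A
  zero_mem' := hA.zero_mem
  add_mem' := fun h1 h2 => hA.add_mem h1 h2
  neg_mem' := fun h => hA.neg_mem h

lemma hmul_neg (a b : G) : hmul a (-b) = (fun x => -x) '' (hmul a b) := by
  rw [hmul_comm, neg_hmul, hmul_comm]

lemma hmul_closure {c : G} {X : Set G} (hX : X.Nonempty) {w : G}
    (hw : w ∈ AddSubgroup.closure X) :
    hmul c w ⊆ (AddSubgroup.closure (smulSet c X) : Set G) := by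
  induction hw using AddSubgroup.closure_induction with
  | mem x hx =>
    exact fun z hz => AddSubgroup.subset_closure (Set.mem_biUnion hx hz)
  | zero =>
    obtain ⟨x₀, hx₀⟩ := hX
    intro z hz
    have h0 : (0 : G) = x₀ + (-x₀) := by abel
    have h1 : z ∈ hmul c (x₀ + (-x₀)) := by rwa [← h0]
    obtain ⟨p, hp, q, hq, hz'⟩ := hmul_add c x₀ (-x₀) h1
    rw [hmul_neg] at hq
    obtain ⟨q', hq', rfl⟩ := hq
    have hpc : p ∈ AddSubgroup.closure (smulSet c X) :=
      AddSubgroup.subset_closure (Set.mem_biUnion hx₀ hp)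
    have hqc : q' ∈ AddSubgroup.closure (smulSet c X) :=
      AddSubgroup.subset_closure (Set.mem_biUnion hx₀ hq')
    rw [hz', ← sub_eq_add_neg]
    exact sub_mem hpc hqc
  | add x y hx hy ihx ihy =>
    intro z hz
    obtain ⟨p, hp, q, hq, hz'⟩ := hmul_add c x y hz
    rw [hz']
    exact add_mem (ihx hp) (ihy hq)
  | neg x hx ihx =>
    intro z hz
    rw [hmul_neg] at hz
    obtain ⟨z', hz', rfl⟩ := hz
    exact neg_mem (ihx hz')

end MulHyperring
namespace MulHyperring

variable {G : Type*} [MulHyperring G]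

lemma mixed_list_subset {A : Set G} (hA : IsHyperideal A) {a c : G} {m n : ℕ}
    (hm : 1 ≤ m) (hn : 1 ≤ n) (ha : hPow a m ⊆ A) (hc : hPow c n ⊆ A)
    {l : List G} (hmem : ∀ x ∈ l, x = a ∨ x = c) (hlen : m + n ≤ l.length) :
    hProd l ⊆ A := by
  classical
  set l₁ := l.filter (fun x => decide (x = a)) with hl₁
  set l₂ := l.filter (fun x => !decide (x = a)) with hl₂
  have hperm : (l₁ ++ l₂).Perm l := List.filter_append_perm _ l
  have h1 : l₁ = List.replicate l₁.length a :=
    List.eq_replicate_of_mem (fun b hb => by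
      have := List.mem_filter.mp hb
      simpa using this.2)
  have h2 : l₂ = List.replicate l₂.length c := by
    refine List.eq_replicate_of_mem (fun b hb => ?_)
    have h := List.mem_filter.mp hb
    have hba : ¬ b = a := by simpa using h.2
    rcases hmem b h.1 with h' | h'
    · exact absurd h' hba
    · exact h'
  have hlen2 : l₁.length + l₂.length = l.length := by
    rw [← List.length_append]; exact hperm.length_eq
  rcases le_or_gt m l₁.length with h | h
  · have heq : hProd l = hProd (l₂ ++ l₁) :=
      (hProd_perm (hperm.symm.trans List.perm_append_comm))
    rw [heq, h1]
    exact hProd_append_subset hA (List.length_pos_iff.mp (by rw [List.length_replicate]; omega))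
      (hPow_subset_of_le hA hm ha h)
  · have hn2 : n ≤ l₂.length := by omega
    rw [← hProd_perm hperm, h2]
    exact hProd_append_subset hA (List.length_pos_iff.mp (by rw [List.length_replicate]; omega))
      (hPow_subset_of_le hA hn hc hn2)

/-- The set of all products of `k`-element lists drawn from `{a, c}`. -/
def binU (a c : G) (k : ℕ) : Set G :=
  {z | ∃ l : List G, (∀ x ∈ l, x = a ∨ x = c) ∧ l.length = k ∧ z ∈ hProd l}

lemma binU_nonempty (a c : G) {k : ℕ} (hk : 1 ≤ k) : (binU a c k).Nonempty := by
  obtain ⟨z, hz⟩ := hPow_nonempty (a := a) hk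
  exact ⟨z, List.replicate k a, fun x hx => Or.inl (List.eq_of_mem_replicate hx), by simp, hz⟩

lemma binomial (a c : G) : ∀ k : ℕ, 1 ≤ k →
    hPow (a + c) k ⊆ (AddSubgroup.closure (binU a c k) : Set G) := by
  intro k
  induction k with
  | zero => omega
  | succ k ih =>
    intro _
    rcases Nat.eq_zero_or_pos k with hk | hk
    · subst hk
      intro z hz
      rw [hPow_one, Set.mem_singleton_iff] at hz
      subst hz
      have haU : a ∈ binU a c 1 := ⟨[a], by simp, by simp, rfl⟩
      have hcU : c ∈ binU a c 1 := ⟨[c], by simp, by simp, rfl⟩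
      exact add_mem (AddSubgroup.subset_closure haU) (AddSubgroup.subset_closure hcU)
    · rw [hPow_succ _ hk]
      intro z hz
      obtain ⟨w, hw, hzw⟩ := mem_smulSet.mp hz
      have hwcl : w ∈ AddSubgroup.closure (binU a c k) := ih hk hw
      have step : hmul (a + c) w ⊆
          (AddSubgroup.closure (smulSet (a + c) (binU a c k)) : Set G) :=
        hmul_closure (binU_nonempty a c hk) hwcl
      have hsub : smulSet (a + c) (binU a c k) ⊆
          (AddSubgroup.closure (binU a c (k + 1)) : Set G) := by
        intro y hy
        obtain ⟨x, ⟨l, hlmem, hllen, hxl⟩, hyx⟩ := mem_smulSet.mp hy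
        have hlne : l ≠ [] := by
          intro hnil; rw [hnil] at hllen; simp at hllen; omega
        have hyx' : y ∈ hmul x (a + c) := by rwa [hmul_comm]
        obtain ⟨p, hp, q, hq, hy'⟩ := hmul_add x a c hyx'
        have hpU : p ∈ binU a c (k + 1) := by
          refine ⟨a :: l, ?_, by simp [hllen], ?_⟩
          · intro x' hx'
            rcases hx' with _ | h
            · exact Or.inl rfl
            · exact hlmem _ (by assumption)
          · rw [hProd_cons hlne]
            exact mem_smulSet.mpr ⟨x, hxl, by rwa [hmul_comm] at hp⟩
        have hqU : q ∈ binU a c (k + 1) := by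
          refine ⟨c :: l, ?_, by simp [hllen], ?_⟩
          · intro x' hx'
            rcases hx' with _ | h
            · exact Or.inr rfl
            · exact hlmem _ (by assumption)
          · rw [hProd_cons hlne]
            exact mem_smulSet.mpr ⟨x, hxl, by rwa [hmul_comm] at hq⟩
        rw [hy']
        exact add_mem (AddSubgroup.subset_closure hpU) (AddSubgroup.subset_closure hqU)
      have : (AddSubgroup.closure (smulSet (a + c) (binU a c k)) : AddSubgroup G) ≤
          AddSubgroup.closure (binU a c (k + 1)) :=
        AddSubgroup.closure_le _ |>.mpr hsub
      exact this (step hzw)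

lemma rad_sub_mem {A : Set G} (hA : IsCHyperideal A) {x y : G} (hx : x ∈ rad A)
    (hy : y ∈ rad A) : x - y ∈ rad A := by
  have hny : -y ∈ rad A := neg_mem_rad hA.1 hy
  obtain ⟨m, hm, hxm⟩ := hx
  obtain ⟨n, hn, hyn⟩ := hny
  refine ⟨m + n, by omega, ?_⟩
  rw [sub_eq_add_neg]
  refine (binomial x (-y) (m + n) (by omega)).trans ?_
  have hUA : binU x (-y) (m + n) ⊆ A := by
    rintro z ⟨l, hlmem, hllen, hzl⟩
    exact mixed_list_subset hA.1 hm hn hxm hyn hlmem (by omega) hzl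
  have : AddSubgroup.closure (binU x (-y) (m + n)) ≤ hA.1.toAddSubgroup :=
    AddSubgroup.closure_le _ |>.mpr hUA
  exact fun z hz => this hz

lemma rad_isHyperideal {A : Set G} (hA : IsCHyperideal A) : IsHyperideal (rad A) := by
  obtain ⟨a, ha⟩ := hA.1.1
  exact ⟨⟨a, subset_rad A ha⟩, fun x hx y hy => rad_sub_mem hA hx hy,
    fun r x hx => rad_absorb hA.1 r hx⟩

end MulHyperring
namespace MulHyperring

variable {G : Type*} [MulHyperring G]

lemma colon_isHyperideal {Q : Set G} (hQ : IsHyperideal Q) (t : G) :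
    IsHyperideal (colon Q t) := by
  refine ⟨?_, ?_, ?_⟩
  · obtain ⟨z, hz⟩ := hQ.1
    exact ⟨z, hQ.absorb' t hz⟩
  · intro x hx y hy
    show hmul (x - y) t ⊆ Q
    intro s hs
    have hs' : s ∈ hmul t (x + (-y)) := by
      rwa [hmul_comm, sub_eq_add_neg] at hs
    obtain ⟨p, hp, q, hq, hs''⟩ := hmul_add t x (-y) hs'
    rw [hmul_neg] at hq
    obtain ⟨q', hq', rfl⟩ := hq
    have hpQ : p ∈ Q := hx (by rwa [hmul_comm] at hp)
    have hqQ : q' ∈ Q := hy (by rwa [hmul_comm] at hq')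
    rw [hs'', ← sub_eq_add_neg]
    exact hQ.sub_mem hpQ hqQ
  · intro r x hx z hz
    show hmul z t ⊆ Q
    intro s hs
    have : s ∈ ⋃ w ∈ hmul r x, hmul w t := Set.mem_biUnion hz hs
    rw [hmul_assoc r x t] at this
    obtain ⟨w, hw, hsw⟩ := Set.mem_iUnion₂.mp this
    exact hQ.absorb r (hx hw) hsw

/-- If `t ∘ x ⊆ rad A` for all `x ∈ u ^ m`, then `t ∘ u ⊆ rad A`. -/
lemma rad_pullback {A : Set G} (hA : IsCHyperideal A) {t u : G} {m : ℕ} (hm : 1 ≤ m)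
    (h : ∀ x ∈ hPow u m, hmul t x ⊆ rad A) : hmul t u ⊆ rad A := by
  intro w hw
  apply rad_idem hA
  refine ⟨m, hm, ?_⟩
  have hw' : w ∈ hProd [t, u] := by rwa [hProd_pair]
  have h1 : hPow w m ⊆ hProd (List.replicate m t ++ List.replicate m u) := by
    refine (hPow_subset_hProd_flatten (by simp) hw' hm).trans ?_
    rw [hProd_perm (flatten_replicate_pair_perm m t u)]
  refine h1.trans ?_
  have hlist : List.replicate m t ++ List.replicate m u
      = List.replicate (m - 1) t ++ (t :: List.replicate m u) := by
    rw [show List.replicate m t = List.replicate (m - 1) t ++ [t] from by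
      rw [← List.replicate_succ']; congr 1; omega, List.append_assoc]
    rfl
  rw [hlist]
  refine hProd_append_subset (rad_isHyperideal hA) (by simp) ?_
  rw [hProd_cons (List.length_pos_iff.mp (by rw [List.length_replicate]; omega))]
  exact smulSet_subset h

/-- `rad A` satisfies the `S`-prime divisibility condition. -/
lemma rad_cond {A : Set G} (hA : IsCHyperideal A) {t : G}
    (hq : ∀ u v : G, hmul u v ⊆ A → hmul t u ⊆ rad A ∨ hmul t v ⊆ rad A)
    {u v : G} (h : hmul u v ⊆ rad A) :
    hmul t u ⊆ rad A ∨ hmul t v ⊆ rad A := by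
  obtain ⟨z, hz⟩ := hmul_nonempty u v
  obtain ⟨m, hm, hzm⟩ := h hz
  have hz' : z ∈ hProd [u, v] := by rwa [hProd_pair]
  have hexp := CHyperideal.expand hA (l := [u, v]) (by simp) hz' hm hzm
  rw [hProd_perm (flatten_replicate_pair_perm m u v)] at hexp
  rw [hProd_append (List.length_pos_iff.mp (by rw [List.length_replicate]; omega))
    (List.length_pos_iff.mp (by rw [List.length_replicate]; omega))] at hexp
  have key : ∀ x ∈ hPow u m, ∀ y ∈ hPow v m, hmul x y ⊆ A := by
    intro x hx y hy s hs
    exact hexp (mem_setMul.mpr ⟨x, hx, y, hy, hs⟩)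
  by_cases hcase : ∀ x ∈ hPow u m, hmul t x ⊆ rad A
  · exact Or.inl (rad_pullback hA hm hcase)
  · push_neg at hcase
    obtain ⟨x₁, hx₁, hnx₁⟩ := hcase
    have hall : ∀ y ∈ hPow v m, hmul t y ⊆ rad A := fun y hy =>
      (hq x₁ y (key x₁ hx₁ y hy)).resolve_left hnx₁
    exact Or.inr (rad_pullback hA hm hall)

lemma colon_isPrime {S A : Set G} (hS : IsMCS S) (hA : IsCHyperideal A) {t : G} (ht : t ∈ S)
    (hdisj : A ∩ S = ∅)
    (hq : ∀ u v : G, hmul u v ⊆ A → hmul t u ⊆ rad A ∨ hmul t v ⊆ rad A) :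
    IsPrime (colon (rad A) t) := by
  have hradS : rad A ∩ S = ∅ := rad_inter_S hS hdisj
  have hradI : IsHyperideal (rad A) := rad_isHyperideal hA
  have httS : ¬ hmul t t ⊆ rad A := by
    intro hc
    obtain ⟨s₀, hs₀, hs₀S⟩ := hS.2 t ht t ht
    exact absurd hradS (Set.nonempty_iff_ne_empty.mp ⟨s₀, hc hs₀, hs₀S⟩)
  refine ⟨colon_isHyperideal hradI t, ?_, ?_⟩
  · intro hc
    have htmem : t ∈ colon (rad A) t := by rw [hc]; trivial
    exact httS htmem
  · intro x y hxy
    have step1 : ∀ w ∈ hmul y t, hmul x w ⊆ rad A := by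
      intro w hw s hs
      have h1 : s ∈ ⋃ w ∈ hmul y t, hmul x w := Set.mem_biUnion hw hs
      rw [← hmul_assoc x y t] at h1
      obtain ⟨z, hz, hsz⟩ := Set.mem_iUnion₂.mp h1
      exact hxy hz hsz
    by_cases hx : hmul t x ⊆ rad A
    · exact Or.inl (by rw [colon, Set.mem_setOf_eq, hmul_comm]; exact hx)
    · have step2 : ∀ w ∈ hmul y t, hmul t w ⊆ rad A := fun w hw =>
        (rad_cond hA hq (step1 w hw)).resolve_left hx
      have step3 : ∀ z ∈ hmul t t, hmul y z ⊆ rad A := by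
        intro z hz s hs
        have h1 : s ∈ ⋃ z ∈ hmul t t, hmul y z := Set.mem_biUnion hz hs
        rw [← hmul_assoc y t t] at h1
        obtain ⟨w, hw, hsw⟩ := Set.mem_iUnion₂.mp h1
        rw [hmul_comm] at hsw
        exact step2 w hw hsw
      by_cases hy : hmul t y ⊆ rad A
      · exact Or.inr (by rw [colon, Set.mem_setOf_eq, hmul_comm]; exact hy)
      · exfalso
        have step4 : ∀ z ∈ hmul t t, hmul t z ⊆ rad A := fun z hz =>
          (rad_cond hA hq (step3 z hz)).resolve_left hy
        obtain ⟨s₀, hs₀, hs₀S⟩ := hS.2 t ht t ht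
        obtain ⟨y₀, hy₀, hy₀S⟩ := hS.2 t ht s₀ hs₀S
        exact absurd hradS
          (Set.nonempty_iff_ne_empty.mp ⟨y₀, step4 s₀ hs₀ hy₀, hy₀S⟩)

lemma prime_factor {P : Set G} (hP : IsPrime P) {l : List G} (hl : l ≠ [])
    (h : hProd l ⊆ P) : ∃ a ∈ l, a ∈ P := by
  induction l with
  | nil => exact absurd rfl hl
  | cons a l' ih =>
    by_cases hl' : l' = []
    · subst hl'
      exact ⟨a, by simp, h rfl⟩
    · by_cases ha : a ∈ P
      · exact ⟨a, by simp, ha⟩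
      · have hsub : hProd l' ⊆ P := by
          intro x hx
          refine (hP.2.2 a x (fun s hs => h ?_)).resolve_left ha
          rw [hProd_cons hl']
          exact Set.mem_biUnion hx hs
        obtain ⟨b, hb, hbP⟩ := ih hl' hsub
        exact ⟨b, by simp [hb], hbP⟩

lemma prime_avoidance {ι : Type*} [DecidableEq ι] (P : ι → Set G) {B : Set G}
    (hB : IsHyperideal B) :
    ∀ s : Finset ι, (∀ i ∈ s, IsPrime (P i)) → (B ⊆ ⋃ i ∈ s, P i) → ∃ i ∈ s, B ⊆ P i := by
  intro s
  induction s using Finset.strongInduction with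
  | _ s ih =>
    intro hprime hsub
    by_cases hred : ∃ i ∈ s, B ⊆ ⋃ j ∈ s.erase i, P j
    · obtain ⟨i, hi, hBi⟩ := hred
      obtain ⟨j, hj, hBj⟩ := ih (s.erase i) (Finset.erase_ssubset hi)
        (fun j hj => hprime j (Finset.mem_of_mem_erase hj)) hBi
      exact ⟨j, Finset.mem_of_mem_erase hj, hBj⟩
    · push_neg at hred
      have hchoice : ∀ i ∈ s, ∃ x, x ∈ B ∧ x ∉ ⋃ j ∈ s.erase i, P j := by
        intro i hi
        obtain ⟨x, hx1, hx2⟩ := Set.not_subset.mp (hred i hi)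
        exact ⟨x, hx1, hx2⟩
      classical
      choose! b hbB hbn using hchoice
      have hbP : ∀ i ∈ s, b i ∈ P i := by
        intro i hi
        have h1 := hsub (hbB i hi)
        simp only [Set.mem_iUnion] at h1
        obtain ⟨j, hj, hbj⟩ := h1
        by_cases hij : j = i
        · subst hij; exact hbj
        · exact absurd (Set.mem_biUnion (Finset.mem_erase.mpr ⟨hij, hj⟩) hbj) (hbn i hi)
      rcases s.eq_empty_or_nonempty with rfl | ⟨i₀, hi₀⟩
      · obtain ⟨x, hx⟩ := hB.1
        have := hsub hx
        simp at this
      · by_cases herase : s.erase i₀ = ∅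
        · refine ⟨i₀, hi₀, fun x hx => ?_⟩
          have h1 := hsub hx
          simp only [Set.mem_iUnion] at h1
          obtain ⟨j, hj, hxj⟩ := h1
          have hji : j = i₀ := by
            by_contra hne
            exact absurd (Finset.mem_erase.mpr ⟨hne, hj⟩) (by simp [herase])
          rwa [← hji]
        · exfalso
          set l := (s.erase i₀).toList.map b with hldef
          have hlne : l ≠ [] := by
            simp only [hldef, ne_eq, List.map_eq_nil_iff, Finset.toList_eq_nil]
            exact herase
          have hmem_l : ∀ x ∈ l, ∃ j ∈ s.erase i₀, x = b j := by
            intro x hx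
            rw [hldef] at hx
            obtain ⟨j, hj, rfl⟩ := List.mem_map.mp hx
            exact ⟨j, Finset.mem_toList.mp hj, rfl⟩
          have hlB : hProd l ⊆ B := by
            obtain ⟨x₀, hx₀⟩ := List.exists_mem_of_ne_nil l hlne
            obtain ⟨j₀, hj₀, hx₀j⟩ := hmem_l x₀ hx₀
            exact hProd_subset_of_mem hB hx₀ (hx₀j ▸ hbB j₀ (Finset.mem_of_mem_erase hj₀))
          have hPl : hProd l ⊆ P i₀ := by
            intro x hx
            have hxB : x ∈ B := hlB hx
            have hsum : b i₀ + x ∈ B := hB.add_mem (hbB i₀ hi₀) hxB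
            have h1 := hsub hsum
            simp only [Set.mem_iUnion] at h1
            obtain ⟨j, hj, hsj⟩ := h1
            by_cases hji : j = i₀
            · subst hji
              have := ((hprime j hj).1).sub_mem hsj (hbP j hj)
              rwa [add_sub_cancel_left] at this
            · exfalso
              have hjer : j ∈ s.erase i₀ := Finset.mem_erase.mpr ⟨hji, hj⟩
              have hbjl : b j ∈ l := by
                rw [hldef]
                exact List.mem_map.mpr ⟨j, Finset.mem_toList.mpr hjer, rfl⟩
              have hxPj : x ∈ P j :=
                hProd_subset_of_mem (hprime j hj).1 hbjl (hbP j hj) hx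
              have hb₀ : b i₀ ∈ P j := by
                have := ((hprime j hj).1).sub_mem hsj hxPj
                rwa [add_sub_cancel_right] at this
              exact (hbn i₀ hi₀) (Set.mem_biUnion hjer hb₀)
          obtain ⟨a, hal, haP⟩ := prime_factor (hprime i₀ hi₀) hlne hPl
          obtain ⟨j, hjer, rfl⟩ := hmem_l a hal
          have hi₀j : i₀ ∈ s.erase j :=
            Finset.mem_erase.mpr ⟨fun h => (Finset.mem_erase.mp hjer).1 h.symm, hi₀⟩
          exact (hbn j (Finset.mem_of_mem_erase hjer)) (Set.mem_biUnion hi₀j haP)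

end MulHyperring

open MulHyperring in
theorem quasiSPrimary_avoidance {G : Type*} [MulHyperring G] (S : Set G) (hS : IsMCS S)
    (k : ℕ) (A : Fin k → Set G) (hA : ∀ i, IsCHyperideal (A i))
    (hq : ∀ i, IsQuasiSPrimary S (A i)) (B : Set G) (hB : IsHyperideal B)
    (hsub : B ⊆ ⋃ i, A i) :
    ∃ t ∈ S, ∃ j, smulSet t B ⊆ rad (A j) := by
  classical
  choose t htS hq' using fun i => (hq i).2.2
  set P : Fin k → Set G := fun i => colon (rad (A i)) (t i) with hP
  have hPprime : ∀ i, IsPrime (P i) := fun i =>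
    colon_isPrime hS (hA i) (htS i) (hq i).2.1 (hq' i)
  have hBP : B ⊆ ⋃ i ∈ (Finset.univ : Finset (Fin k)), P i := by
    intro x hx
    obtain ⟨i, hi⟩ : ∃ i, x ∈ A i := by simpa using hsub hx
    have hxx : hmul x x ⊆ A i := (hA i).1.absorb x hi
    have hcol : x ∈ P i := by
      rcases hq' i x x hxx with h | h <;>
        · rw [hP]
          show hmul x (t i) ⊆ rad (A i)
          rwa [hmul_comm]
    exact Set.mem_biUnion (Finset.mem_univ i) hcol
  obtain ⟨j, _, hBj⟩ := prime_avoidance P hB Finset.univ (fun i _ => hPprime i) hBP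
  refine ⟨t j, htS j, j, ?_⟩
  intro z hz
  obtain ⟨x, hx, hzx⟩ := mem_smulSet.mp hz
  have hxc : hmul x (t j) ⊆ rad (A j) := hBj hx
  rw [hmul_comm] at hzx
  exact hxc hzx
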